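/- Let F: M₊ → N₊ be a local diffeomorphism written in normal-form coordinates as (r,x) ↦ (F^s(r,x), F^{\bar i}(r,x)) with F^s(0,x) = 0. If F maps every surface orthogonal to the boundary to a surface orthogonal to the boundary (in the compactified metrics ḡ = dr² + g_r, h̄ = ds² + h_s), then F^{\bar i}_{,r} = 0 on {r = 0} for all i, and consequently F^s_{,r} ≠ 0 on {r = 0}. -/

import Mathlib

open scoped RealInnerProductSpace

/-- First step of the proof of Theorem 2.2: write a local diffeomorphism `F` between
Poincaré–Einstein spaces in normal-form coordinates `(r,x) ↦ (F^s, F^{x̄})` with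
`F^s(0,x) = 0`.  If the image under `F` of every (vertical half-plane) surface
orthogonal to the boundary is orthogonal to the boundary — i.e. for every boundary
point and every direction `v ≠ 0`, the plane spanned by `dF(∂_r)` and `dF(∂_v)`
contains the inward unit normal `∂_s = (1,0)` — then `F^{x̄}_{,r} = 0` on `{r = 0}`
and consequently `F^s_{,r} ≠ 0` on `{r = 0}`. -/
theorem stmt17 {E : Type*} [NormedAddCommGroup E] [InnerProductSpace ℝ E]
    [FiniteDimensional ℝ E] (hdim : 2 ≤ Module.finrank ℝ E)
    (F : ℝ × E → ℝ × E) (hFsm : ContDiff ℝ (⊤ : ℕ∞) F)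
    (hFbij : ∀ p : ℝ × E, Function.Bijective (fderiv ℝ F p))
    (hFbd : ∀ x : E, (F (0, x)).1 = 0)
    (hFint : ∀ (r : ℝ) (x : E), 0 < r → 0 < (F (r, x)).1)
    (hortho : ∀ (x : E) (v : E), v ≠ 0 →
      ((1:ℝ), (0:E)) ∈ Submodule.span ℝ
        {fderiv ℝ F (0, x) (1, 0), fderiv ℝ F (0, x) (0, v)}) :
    ∀ x : E, (fderiv ℝ F (0, x) (1, 0)).2 = 0 ∧ (fderiv ℝ F (0, x) (1, 0)).1 ≠ 0 := by
  intro x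
  set A := fderiv ℝ F (0, x) with hA
  -- first components of boundary-tangent derivatives vanish
  have hbd1 : ∀ v : E, (A (0, v)).1 = 0 := by
    intro v
    have hdF : HasFDerivAt F A (0, x) :=
      (hFsm.differentiable (by simp) (0, x)).hasFDerivAt
    have hinr : HasFDerivAt (fun y : E => ((0 : ℝ), y))
        (ContinuousLinearMap.inr ℝ ℝ E) x :=
      (ContinuousLinearMap.inr ℝ ℝ E).hasFDerivAt
    have hcomp : HasFDerivAt (fun y : E => (F (0, y)).1)
        ((ContinuousLinearMap.fst ℝ ℝ E).comp
          (A.comp (ContinuousLinearMap.inr ℝ ℝ E))) x :=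
      (ContinuousLinearMap.fst ℝ ℝ E).hasFDerivAt.comp x (hdF.comp x hinr)
    have hconst : HasFDerivAt (fun y : E => (F (0, y)).1) (0 : E →L[ℝ] ℝ) x := by
      have : (fun y : E => (F (0, y)).1) = fun _ => (0 : ℝ) := funext hFbd
      rw [this]; exact hasFDerivAt_const 0 x
    have := hcomp.unique hconst
    have := congrArg (fun (L : E →L[ℝ] ℝ) => L v) this
    simpa using this
  -- nontrivial E
  have hnt : Nontrivial E := by
    have : 0 < Module.finrank ℝ E := by omega
    exact Module.nontrivial_of_finrank_pos this
  -- a₁ ≠ 0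
  have ha1 : (A (1, 0)).1 ≠ 0 := by
    obtain ⟨v0, hv0⟩ := exists_ne (0 : E)
    obtain ⟨c, d, hcd⟩ := (Submodule.mem_span_pair).1 (hortho x v0 hv0)
    have h1 : c * (A (1, 0)).1 + d * (A (0, v0)).1 = 1 := by
      have := congrArg Prod.fst hcd
      simpa using this
    rw [hbd1 v0, mul_zero, add_zero] at h1
    intro h; rw [h, mul_zero] at h1; exact one_ne_zero h1.symm
  -- key: a₂ ∈ span of (A (0,v)).2 for each v ≠ 0
  have hkey : ∀ v : E, v ≠ 0 → ∃ t : ℝ, (A (1, 0)).2 = t • (A (0, v)).2 := by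
    intro v hv
    obtain ⟨c, d, hcd⟩ := (Submodule.mem_span_pair).1 (hortho x v hv)
    have h1 : c * (A (1, 0)).1 + d * (A (0, v)).1 = 1 := by
      have := congrArg Prod.fst hcd
      simpa using this
    rw [hbd1 v, mul_zero, add_zero] at h1
    have hc : c ≠ 0 := by
      intro h; rw [h, zero_mul] at h1; exact one_ne_zero h1.symm
    have h2 : c • (A (1, 0)).2 + d • (A (0, v)).2 = 0 := by
      have := congrArg Prod.snd hcd
      simpa using this
    refine ⟨-(d / c), ?_⟩
    have h3 : (A (1, 0)).2 = c⁻¹ • (-(d • (A (0, v)).2)) := by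
      rw [← eq_neg_of_add_eq_zero_left h2, smul_smul, inv_mul_cancel₀ hc, one_smul]
    rw [h3]
    module
  -- a₂ = 0
  have ha2 : (A (1, 0)).2 = 0 := by
    by_contra ha2
    -- T : v ↦ (A (0,v)).2 is injective, hence surjective
    set T : E →ₗ[ℝ] E :=
      ((ContinuousLinearMap.snd ℝ ℝ E).comp
        (A.comp (ContinuousLinearMap.inr ℝ ℝ E))).toLinearMap with hT
    have hTinj : Function.Injective T := by
      intro u w huw
      have h : A (0, u) = A (0, w) := by
        have h1 : (A (0, u)).1 = (A (0, w)).1 := by rw [hbd1, hbd1]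
        exact Prod.ext h1 huw
      have := (hFbij (0, x)).1 h
      exact congrArg Prod.snd this
    have hTsurj : Function.Surjective T :=
      (LinearMap.injective_iff_surjective).1 hTinj
    -- choose w' not in span {a₂}
    have hspan : (Submodule.span ℝ {(A (1, 0)).2}) ≠ ⊤ := by
      intro h
      have h1 : Module.finrank ℝ (Submodule.span ℝ {(A (1, 0)).2}) = 1 :=
        finrank_span_singleton ha2
      rw [h] at h1
      have := finrank_top ℝ E
      omega
    obtain ⟨w', hw'⟩ : ∃ w', w' ∉ Submodule.span ℝ {(A (1, 0)).2} := by
      by_contra h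
      push_neg at h
      exact hspan (Submodule.eq_top_iff'.2 h)
    obtain ⟨w, hw⟩ := hTsurj w'
    have hwne : w ≠ 0 := by
      intro h
      rw [h, map_zero] at hw
      exact hw' (hw ▸ Submodule.zero_mem _)
    obtain ⟨t, ht⟩ := hkey w hwne
    have hTw : (A (0, w)).2 = w' := hw
    rw [hTw] at ht
    have htne : t ≠ 0 := by
      intro h; rw [h, zero_smul] at ht; exact ha2 ht
    apply hw'
    rw [Submodule.mem_span_singleton]
    exact ⟨t⁻¹, by rw [ht, smul_smul, inv_mul_cancel₀ htne, one_smul]⟩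
  exact ⟨ha2, ha1⟩
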